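/- Let X be a δ-hyperbolic metric space, K ≥ 7δ, and f, g isometries of X such that for some x ∈ X, d(fx, gx) > max(d(fx,x) + d∞(g), d(gx,x) + d∞(f)) + K. Then d∞(fg) > d∞(f) + d∞(g) + 2K − 14δ; in particular d∞(fg) > 0, so fg is a hyperbolic isometry. -/

import Mathlib

open Filter Topology Function

section Aux

variable {X : Type*} [MetricSpace X]

/-- Gromov product of `p` and `q` at basepoint `w`. -/
noncomputable def gr (w p q : X) : ℝ := (dist p w + dist q w - dist p q) / 2

lemma gr_comm (w p q : X) : gr w p q = gr w q p := by
  unfold gr; rw [dist_comm p q]; ring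

lemma gr_nonneg (w p q : X) : 0 ≤ gr w p q := by
  unfold gr
  have h1 := dist_triangle p w q
  have h2 := dist_comm w q
  linarith

lemma gr_isom {φ : X → X} (hφ : Isometry φ) (w p q : X) :
    gr (φ w) (φ p) (φ q) = gr w p q := by
  unfold gr; rw [hφ.dist_eq, hφ.dist_eq, hφ.dist_eq]

lemma isom_iter {φ : X → X} (hφ : Isometry φ) : ∀ n, Isometry (φ^[n])
  | 0 => isometry_id
  | n+1 => by
      rw [Function.iterate_succ]
      exact (isom_iter hφ n).comp hφ

lemma lim_ge {u : ℕ → ℝ} {l c : ℝ}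
    (h : Tendsto (fun n : ℕ => u n / n) atTop (nhds l))
    (hb : ∀ n : ℕ, c * n ≤ u n) : c ≤ l := by
  refine ge_of_tendsto h ?_
  filter_upwards [Filter.eventually_gt_atTop 0] with n hn
  rw [le_div_iff₀ (by exact_mod_cast hn : (0:ℝ) < (n:ℝ))]
  exact hb n

/-- Chain lemma: along a chain with Gromov products at interior points `≤ c`
and steps longer than `2c+2δ`, the endpoints are far apart. -/
lemma chain {δ c : ℝ} (hδ : 0 ≤ δ) (hc : 0 ≤ c)
    (hmin : ∀ w p q r : X, min (gr w p q) (gr w q r) - δ ≤ gr w p r)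
    (y : ℕ → X) (N : ℕ)
    (hgap : ∀ i, i + 1 ≤ N → 2*c + 2*δ < dist (y i) (y (i+1)))
    (hprod : ∀ i, 1 ≤ i → i + 1 ≤ N → gr (y i) (y (i-1)) (y (i+1)) ≤ c) :
    ∀ n, n ≤ N →
      (∑ i ∈ Finset.range n, dist (y i) (y (i+1))) - 2*(n:ℝ)*(c+δ) ≤ dist (y 0) (y n) := by
  have key : ∀ n, (n + 1 ≤ N → gr (y n) (y 0) (y (n+1)) ≤ c + δ) ∧
      (n ≤ N → (∑ i ∈ Finset.range n, dist (y i) (y (i+1))) - 2*(n:ℝ)*(c+δ)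
        ≤ dist (y 0) (y n)) := by
    intro n
    induction n with
    | zero =>
      constructor
      · intro _
        have h0 : gr (y 0) (y 0) (y (0+1)) = 0 := by
          unfold gr; rw [dist_self, dist_comm (y (0+1)) (y 0)]; ring
        rw [h0]; linarith
      · intro _; simp
    | succ n ih =>
      constructor
      · intro hn2
        have hB := ih.1 (by omega)
        have hgp := hgap n (by omega)
        have hpr := hprod (n+1) (by omega) hn2
        simp only [Nat.add_sub_cancel] at hpr
        have hmid : gr (y (n+1)) (y 0) (y n) =
            dist (y n) (y (n+1)) - gr (y n) (y 0) (y (n+1)) := by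
          unfold gr; rw [dist_comm (y (n+1)) (y n)]; ring
        by_contra hcon
        push_neg at hcon
        have h1 : c + δ < gr (y (n+1)) (y n) (y 0) := by
          rw [gr_comm (y (n+1)) (y n) (y 0), hmid]; linarith
        have hk := hmin (y (n+1)) (y n) (y 0) (y (n+1+1))
        have hlt := lt_min h1 hcon
        linarith
      · intro hn
        have hB := ih.1 hn
        have h2 := ih.2 (by omega)
        have hid : dist (y 0) (y (n+1)) =
            dist (y 0) (y n) + dist (y n) (y (n+1)) - 2 * gr (y n) (y 0) (y (n+1)) := by
          unfold gr; rw [dist_comm (y (n+1)) (y n)]; ring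
        rw [Finset.sum_range_succ]
        push_cast
        push_cast at h2
        linarith
  intro n hn; exact (key n).2 hn

/-- Lower bound on the stable length in terms of the Gromov product
`(φ⁻¹ x | φ x)_x`. -/
lemma stable_ge_aux {δ : ℝ} (hδ : 0 ≤ δ)
    (hmin : ∀ w p q r : X, min (gr w p q) (gr w q r) - δ ≤ gr w p r)
    {φ : X → X} (hφ : Isometry φ) (x x' : X) (hx' : φ x' = x) {l : ℝ}
    (hl : Tendsto (fun n : ℕ => dist (φ^[n] x) x / n) atTop (nhds l)) :
    dist x (φ x) - 2 * gr x x' (φ x) - 2 * δ ≤ l := by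
  have hα : 0 ≤ gr x x' (φ x) := gr_nonneg _ _ _
  have hl0 : 0 ≤ l := lim_ge hl (fun n => by simpa using dist_nonneg)
  by_cases hgap : 2 * gr x x' (φ x) + 2*δ < dist x (φ x)
  · apply lim_ge hl
    intro n
    have hd : ∀ i : ℕ, dist (φ^[i] x) (φ^[i+1] x) = dist x (φ x) := by
      intro i
      rw [Function.iterate_succ_apply]
      exact (isom_iter hφ i).dist_eq _ _
    have hpr : ∀ i, 1 ≤ i → gr (φ^[i] x) (φ^[i-1] x) (φ^[i+1] x) ≤ gr x x' (φ x) := by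
      intro i hi
      obtain ⟨j, rfl⟩ : ∃ j, i = j + 1 := ⟨i - 1, by omega⟩
      have e0 : j + 1 - 1 = j := by omega
      rw [e0]
      have e1 : φ^[j] x = φ^[j+1] x' := by
        rw [Function.iterate_succ_apply, hx']
      have e2 : φ^[j+1+1] x = φ^[j+1] (φ x) := Function.iterate_succ_apply φ (j+1) x
      rw [e1, e2, gr_isom (isom_iter hφ (j+1))]
    have hch := chain hδ hα hmin (fun i => φ^[i] x) n
        (fun i _ => by simpa only [hd i] using hgap)
        (fun i hi _ => hpr i hi) n le_rfl
    have hsum : ∑ i ∈ Finset.range n, dist (φ^[i] x) (φ^[i+1] x) = n * dist x (φ x) := by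
      rw [Finset.sum_congr rfl (fun i _ => hd i), Finset.sum_const, Finset.card_range,
        nsmul_eq_mul]
    simp only [Function.iterate_zero_apply] at hch
    rw [hsum] at hch
    rw [dist_comm (φ^[n] x) x]
    have e : (dist x (φ x) - 2*gr x x' (φ x) - 2*δ) * (n:ℝ)
        = (n:ℝ) * dist x (φ x) - 2*(n:ℝ)*(gr x x' (φ x) + δ) := by ring
    rw [e]
    linarith
  · push_neg at hgap
    linarith

end Aux

/-- In a `δ`-hyperbolic metric space, if `K ≥ 7δ` and
`d(fx,gx) > max(d(fx,x)+d∞(g), d(gx,x)+d∞(f)) + K` for some `x`, then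
`d∞(fg) > d∞(f) + d∞(g) + 2K − 14δ`; in particular `d∞(fg) > 0`, i.e. `fg` is
a hyperbolic isometry. -/
theorem stmt6 {X : Type*} [MetricSpace X] (δ : ℝ) (hδ : 0 ≤ δ)
    (hfpc : ∀ x y s t : X, dist x y + dist s t ≤
      max (dist x s + dist y t) (dist x t + dist y s) + 2 * δ)
    (K : ℝ) (hK : 7 * δ ≤ K)
    (f g : X → X) (hf : Isometry f) (hfs : Function.Surjective f)
    (hg : Isometry g) (hgs : Function.Surjective g)
    (x : X) (lf lg lfg : ℝ)
    (hlf : Tendsto (fun n : ℕ => dist (f^[n] x) x / n) atTop (nhds lf))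
    (hlg : Tendsto (fun n : ℕ => dist (g^[n] x) x / n) atTop (nhds lg))
    (hlfg : Tendsto (fun n : ℕ => dist ((f ∘ g)^[n] x) x / n) atTop (nhds lfg))
    (hsep : dist (f x) (g x) >
      max (dist (f x) x + lg) (dist (g x) x + lf) + K) :
    lfg > lf + lg + 2 * K - 14 * δ ∧ 0 < lfg := by
  obtain ⟨x', hx'⟩ := hfs x
  obtain ⟨y', hy'⟩ := hgs x
  -- Gromov-product form of hyperbolicity
  have hmin : ∀ w p q r : X, min (gr w p q) (gr w q r) - δ ≤ gr w p r := by
    intro w p q r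
    have h := hfpc p r w q
    rcases le_total (dist p w + dist r q) (dist p q + dist r w) with hle | hle
    · rw [max_eq_right hle] at h
      have h2 : gr w p q - δ ≤ gr w p r := by
        unfold gr
        have := dist_comm w q
        linarith
      linarith [min_le_left (gr w p q) (gr w q r)]
    · rw [max_eq_left hle] at h
      have h2 : gr w q r - δ ≤ gr w p r := by
        unfold gr
        have := dist_comm w q
        have := dist_comm r q
        linarith
      linarith [min_le_right (gr w p q) (gr w q r)]
  have hlf0 : 0 ≤ lf := lim_ge hlf (fun n => by simpa using dist_nonneg)
  have hlg0 : 0 ≤ lg := lim_ge hlg (fun n => by simpa using dist_nonneg)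
  have hs1 : dist (f x) x + lg + K < dist (f x) (g x) :=
    lt_of_le_of_lt (add_le_add_left (le_max_left _ _) K) hsep
  have hs2 : dist (g x) x + lf + K < dist (f x) (g x) :=
    lt_of_le_of_lt (add_le_add_left (le_max_right _ _) K) hsep
  have hAge := stable_ge_aux hδ hmin hf x x' hx' hlf
  have hBge := stable_ge_aux hδ hmin hg x y' hy' hlg
  set m := gr x (f x) (g x) with hm
  have hmeq : m = (dist (f x) x + dist (g x) x - dist (f x) (g x)) / 2 := rfl
  have hm0 : 0 ≤ m := gr_nonneg _ _ _
  have c1 : dist x (f x) = dist (f x) x := dist_comm _ _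
  have c2 : dist x (g x) = dist (g x) x := dist_comm _ _
  have hα : m + δ < gr x x' (f x) := by linarith
  have hγ : m + δ < gr x y' (g x) := by linarith
  have hβf : gr x x' (g x) ≤ m + δ := by
    by_contra hcon
    push_neg at hcon
    have hk := hmin x (f x) x' (g x)
    rw [← hm] at hk
    have h1 : m + δ < gr x (f x) x' := by rw [gr_comm]; exact hα
    have hlt := lt_min h1 hcon
    linarith
  have hβg : gr x y' (f x) ≤ m + δ := by
    by_contra hcon
    push_neg at hcon
    have hk := hmin x (f x) y' (g x)
    rw [← hm] at hk
    have h1 : m + δ < gr x y' (g x) := hγ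
    have h2 : m + δ < gr x (f x) y' := by rw [gr_comm]; exact hcon
    have hlt := lt_min h2 h1
    linarith
  -- gap bounds
  have hgapf : 2*m + 4*δ < dist x (f x) := by linarith
  have hgapg : 2*m + 4*δ < dist x (g x) := by linarith
  -- the alternating chain for f ∘ g
  have hcomp : Isometry (f ∘ g) := hf.comp hg
  set p : ℕ → X := fun i => if Even i then (f ∘ g)^[i/2] x else (f ∘ g)^[i/2] (f x) with hp
  have hpe : ∀ k, p (2*k) = (f ∘ g)^[k] x := by
    intro k
    have hk2 : (2*k)/2 = k := by omega
    simp only [hp]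
    rw [if_pos ⟨k, (two_mul k)⟩, hk2]
  have hpo : ∀ k, p (2*k+1) = (f ∘ g)^[k] (f x) := by
    intro k
    have hk2 : (2*k+1)/2 = k := by omega
    simp only [hp]
    rw [if_neg (by rw [Nat.even_iff]; omega), hk2]
  have hfg1 : ∀ k : ℕ, (f ∘ g)^[k+1] x = (f ∘ g)^[k] (f (g x)) := by
    intro k
    rw [Function.iterate_succ_apply]
    rfl
  have hfg2 : ∀ k : ℕ, (f ∘ g)^[k+1] (f x) = (f ∘ g)^[k] (f (g (f x))) := by
    intro k
    rw [Function.iterate_succ_apply]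
    rfl
  have hd1 : ∀ k, dist (p (2*k)) (p (2*k+1)) = dist x (f x) := by
    intro k
    rw [hpe, hpo]
    exact (isom_iter hcomp k).dist_eq _ _
  have hd2 : ∀ k, dist (p (2*k+1)) (p (2*k+2)) = dist x (g x) := by
    intro k
    have e3 : 2*k+2 = 2*(k+1) := by ring
    rw [hpo, e3, hpe, hfg1, (isom_iter hcomp k).dist_eq, hf.dist_eq]
  have hpp : ∀ i, 1 ≤ i → gr (p i) (p (i-1)) (p (i+1)) ≤ m + δ := by
    intro i hi
    rcases Nat.even_or_odd i with he | ho
    · obtain ⟨k, rfl⟩ : ∃ k, i = 2*(k+1) := by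
        rcases he with ⟨r, hr⟩; exact ⟨r - 1, by omega⟩
      have e1 : 2*(k+1) - 1 = 2*k+1 := by omega
      have e2 : 2*(k+1) + 1 = 2*(k+1)+1 := rfl
      rw [e1, hpe (k+1), hpo k, hpo (k+1), hfg1, hfg2,
        gr_isom (isom_iter hcomp k)]
      have hrw : gr (f (g x)) (f x) (f (g (f x))) = gr (g x) x (g (f x)) :=
        gr_isom hf _ _ _
      rw [hrw]
      have hrw2 : gr (g x) (g y') (g (f x)) = gr x y' (f x) := gr_isom hg _ _ _
      rw [hy'] at hrw2
      rw [hrw2]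
      exact hβg
    · obtain ⟨k, rfl⟩ := ho
      have e1 : 2*k+1 - 1 = 2*k := by omega
      have e2 : 2*k+1+1 = 2*(k+1) := by ring
      rw [e1, e2, hpo k, hpe k, hpe (k+1), hfg1, gr_isom (isom_iter hcomp k)]
      have hrw : gr (f x) (f x') (f (g x)) = gr x x' (g x) := gr_isom hf _ _ _
      rw [hx'] at hrw
      rw [hrw]
      exact hβf
  have hgp : ∀ i : ℕ, 2*(m+δ) + 2*δ < dist (p i) (p (i+1)) := by
    intro i
    rcases Nat.even_or_odd i with he | ho
    · obtain ⟨k, rfl⟩ : ∃ k, i = 2*k := by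
        rcases he with ⟨r, hr⟩; exact ⟨r, by omega⟩
      rw [hd1 k]
      linarith
    · obtain ⟨k, rfl⟩ := ho
      rw [show 2*k+1+1 = 2*k+2 from rfl, hd2 k]
      linarith
  have hbound : ∀ n : ℕ,
      (dist x (f x) + dist x (g x) - 4*m - 8*δ) * (n:ℝ) ≤ dist ((f ∘ g)^[n] x) x := by
    intro n
    have hch := chain hδ (by linarith : (0:ℝ) ≤ m + δ) hmin p (2*n)
        (fun i _ => hgp i) (fun i hi _ => hpp i hi) (2*n) le_rfl
    have hsum : ∀ n : ℕ, ∑ i ∈ Finset.range (2*n), dist (p i) (p (i+1))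
        = (n:ℝ) * (dist x (f x) + dist x (g x)) := by
      intro n
      induction n with
      | zero => simp
      | succ n ih =>
        rw [show 2*(n+1) = (2*n)+1+1 from by ring, Finset.sum_range_succ,
          Finset.sum_range_succ, ih, hd1 n, show (2*n)+1+1 = 2*n+2 from rfl, hd2 n]
        push_cast
        ring
    have hp0 : p 0 = x := by
      rw [show (0:ℕ) = 2*0 from rfl, hpe]
      simp
    rw [hp0, hpe n, hsum n] at hch
    rw [dist_comm ((f ∘ g)^[n] x) x]
    have e : (dist x (f x) + dist x (g x) - 4*m - 8*δ) * (n:ℝ)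
        = (n:ℝ) * (dist x (f x) + dist x (g x)) - 2*((2*n : ℕ):ℝ)*((m+δ)+δ) := by
      push_cast; ring
    rw [e]
    linarith
  have hlim : dist x (f x) + dist x (g x) - 4*m - 8*δ ≤ lfg := lim_ge hlfg hbound
  have hmain : lf + lg + 2 * K - 14 * δ < lfg := by linarith
  exact ⟨hmain, by linarith⟩
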